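/- arXiv:2510.13156 — 2 statements merged into one kernel-verified Lean document; each statement's English description precedes it below -/
import Mathlib

section
/- Let k1 > 0, k2 < 0, ω = √(-k1 k2), v_th > 0, T0 = 2π/ω, and let m, m1, m2 be reals. Let y(t) = Ω(t)∫₀ᵗ Ω(-s) f(s) ds where f(s) = (m·V(s)² + m1·V(s), m2·H(s)) with (V(s),H(s)) = Ω(s)(v_th, 0)ᵀ and Ω(t) = [[cos(ωt), (k1/ω)sin(ωt)], [(k2/ω)sin(ωt), cos(ωt)]]. Then y(T0) = (π(m1+m2)/ω · v_th, 0). -/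
/-- The variational solution evaluated at T0 equals (π(m1+m2)v_th/ω, 0). -/
theorem stmt_6 (k1 k2 ω T0 vth m m1 m2 : ℝ) (hk1 : 0 < k1) (hk2 : k2 < 0) (hvth : 0 < vth)
    (hω : ω = Real.sqrt (-(k1 * k2))) (hT0 : T0 = 2 * Real.pi / ω)
    (Ω : ℝ → Matrix (Fin 2) (Fin 2) ℝ)
    (hΩ : ∀ t, Ω t = !![Real.cos (ω * t), (k1 / ω) * Real.sin (ω * t);
                        (k2 / ω) * Real.sin (ω * t), Real.cos (ω * t)])
    (V H : ℝ → ℝ) (hV : ∀ s, V s = Real.cos (ω * s) * vth)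
    (hH : ∀ s, H s = (k2 / ω) * Real.sin (ω * s) * vth)
    (f : ℝ → Fin 2 → ℝ) (hfdef : ∀ s, f s = ![m * (V s) ^ 2 + m1 * V s, m2 * H s])
    (y : ℝ → Fin 2 → ℝ)
    (hy : ∀ t, y t = (Ω t).mulVec (∫ s in (0:ℝ)..t, (Ω (-s)).mulVec (f s))) :
    y T0 = ![Real.pi * (m1 + m2) / ω * vth, 0] := by
  have hkk : 0 < -(k1 * k2) := by nlinarith
  have hω0 : 0 < ω := by rw [hω]; exact Real.sqrt_pos.2 hkk
  have hωne : ω ≠ 0 := ne_of_gt hω0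
  have hsq : ω ^ 2 = -(k1 * k2) := by rw [hω]; exact Real.sq_sqrt hkk.le
  have hωT : ω * T0 = 2 * Real.pi := by rw [hT0]; field_simp
  -- explicit integrand
  set g : ℝ → Fin 2 → ℝ := fun s =>
    ![m * vth ^ 2 * Real.cos (ω * s) ^ 3 + m1 * vth * Real.cos (ω * s) ^ 2
        + m2 * vth * Real.sin (ω * s) ^ 2,
      (k2 / ω) * vth * (-(m * vth) * Real.sin (ω * s) * Real.cos (ω * s) ^ 2
        + (m2 - m1) * Real.sin (ω * s) * Real.cos (ω * s))] with hg
  have hint : ∀ s : ℝ, (Ω (-s)).mulVec (f s) = g s := by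
    intro s
    funext i
    fin_cases i
    · simp [hΩ, hfdef, hV, hH, hg, Matrix.mulVec, dotProduct, Fin.sum_univ_two,
        mul_neg, Real.sin_neg, Real.cos_neg]
      field_simp
      linear_combination (-(m2 * Real.sin (ω * s) ^ 2)) * hsq
    · simp [hΩ, hfdef, hV, hH, hg, Matrix.mulVec, dotProduct, Fin.sum_univ_two,
        mul_neg, Real.sin_neg, Real.cos_neg]
      field_simp
      ring
  -- antiderivative
  set F : ℝ → Fin 2 → ℝ := fun s =>
    ![(m * vth ^ 2 / ω) * (Real.sin (ω * s) - Real.sin (ω * s) ^ 3 / 3)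
        + ((m1 + m2) * vth / 2) * s
        + ((m1 - m2) * vth / (2 * ω)) * (Real.sin (ω * s) * Real.cos (ω * s)),
      (k2 / ω) * vth * ((m * vth / (3 * ω)) * Real.cos (ω * s) ^ 3
        + ((m2 - m1) / (2 * ω)) * Real.sin (ω * s) ^ 2)] with hF
  have hderiv : ∀ t : ℝ, HasDerivAt F (g t) t := by
    intro t
    have hs : HasDerivAt (fun s : ℝ => Real.sin (ω * s)) (Real.cos (ω * t) * ω) t := by
      simpa [Function.comp_def] using (Real.hasDerivAt_sin (ω * t)).comp t ((hasDerivAt_id t).const_mul ω)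
    have hc : HasDerivAt (fun s : ℝ => Real.cos (ω * s)) (-Real.sin (ω * t) * ω) t := by
      simpa [Function.comp_def] using (Real.hasDerivAt_cos (ω * t)).comp t ((hasDerivAt_id t).const_mul ω)
    have h := Real.sin_sq_add_cos_sq (ω * t)
    rw [hasDerivAt_pi]
    intro i
    fin_cases i
    · have hd := (((hs.sub ((hs.pow 3).div_const 3)).const_mul (m * vth ^ 2 / ω)).add
        ((hasDerivAt_id t).const_mul ((m1 + m2) * vth / 2))).add
        ((hs.mul hc).const_mul ((m1 - m2) * vth / (2 * ω)))
      refine hd.congr_deriv ?_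
      symm
      simp [hg]
      field_simp
      linear_combination (2 * m * vth * Real.cos (ω * t)
        + m1 + m2) * h
    · have hd := (((hc.pow 3).const_mul (m * vth / (3 * ω))).add
        ((hs.pow 2).const_mul ((m2 - m1) / (2 * ω)))).const_mul ((k2 / ω) * vth)
      refine hd.congr_deriv ?_
      symm
      simp [hg]
      field_simp
      exact Or.inl trivial
  have hcont : Continuous g := by
    rw [hg]
    apply continuous_pi
    intro i
    fin_cases i <;> simp <;> fun_prop
  have hInt : (∫ s in (0:ℝ)..T0, (Ω (-s)).mulVec (f s)) = F T0 - F 0 := by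
    simp_rw [hint]
    exact intervalIntegral.integral_eq_sub_of_hasDerivAt (fun t _ => hderiv t)
      (hcont.intervalIntegrable 0 T0)
  have hΩT : Ω T0 = 1 := by
    rw [hΩ, hωT, Matrix.one_fin_two]
    simp [Real.cos_two_pi, Real.sin_two_pi]
  rw [hy, hInt, hΩT, Matrix.one_mulVec]
  have hsT : Real.sin (ω * T0) = 0 := by rw [hωT]; exact Real.sin_two_pi
  have hcT : Real.cos (ω * T0) = 1 := by rw [hωT]; exact Real.cos_two_pi
  funext i
  fin_cases i
  · simp [hF, hsT, hcT, hT0]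
    field_simp
    rw [Real.sin_two_pi, Real.cos_two_pi]
    ring
  · simp [hF, hsT, hcT]
end

section
/- Let ω > 0, v_th > 0, m, m1, m2 ∈ ℝ, k1 > 0, with k2 = -ω²/k1. Define y : ℝ → ℝ² by y(t) = ( cos(ωt)(2 m v_th² sin(ωt)/(3ω) + t v_th(m1+m2)/2) + v_th sin(ωt)(2 m v_th + 3(m1 - m2))/(6ω), m v_th² cos(ωt)/(3k1) - m v_th² sin²(ωt)/(3k1) - t v_th (m1+m2) ω sin(ωt)/(2k1) - m v_th²/(3k1) ). Then y(0) = 0 and y'(t) = A y(t) + f(t), where A = [[0, k1],[k2, 0]] and f(t) = (m V(t)² + m1 V(t), m2 H(t)) with V(t) = v_th cos(ωt), H(t) = (k2/ω) v_th sin(ωt). -/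
lemma aux13 (ω A B C D E F G t : ℝ) :
    HasDerivAt (fun t : ℝ => A * (Real.cos (ω * t) * Real.sin (ω * t))
        + B * (t * Real.cos (ω * t)) + C * Real.sin (ω * t) + D * Real.cos (ω * t)
        + E * (Real.sin (ω * t)) ^ 2 + F * (t * Real.sin (ω * t)) + G)
      (A * (ω * Real.cos (ω * t) * Real.cos (ω * t) - ω * Real.sin (ω * t) * Real.sin (ω * t))
        + B * (Real.cos (ω * t) - t * (ω * Real.sin (ω * t)))
        + C * (ω * Real.cos (ω * t)) + D * (-(ω * Real.sin (ω * t)))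
        + E * (2 * Real.sin (ω * t) * (ω * Real.cos (ω * t)))
        + F * (Real.sin (ω * t) + t * (ω * Real.cos (ω * t)))) t := by
  have hc : HasDerivAt (fun t : ℝ => Real.cos (ω * t)) (-(ω * Real.sin (ω * t))) t := by
    simpa [mul_comm, Function.comp_def] using (Real.hasDerivAt_cos (ω * t)).comp t ((hasDerivAt_id t).const_mul ω)
  have hs : HasDerivAt (fun t : ℝ => Real.sin (ω * t)) (ω * Real.cos (ω * t)) t := by
    simpa [mul_comm, Function.comp_def] using (Real.hasDerivAt_sin (ω * t)).comp t ((hasDerivAt_id t).const_mul ω)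
  have h1 := ((hc.mul hs).const_mul A)
  have h2 := (((hasDerivAt_id t).mul hc).const_mul B)
  have h3 := hs.const_mul C
  have h4 := hc.const_mul D
  have h5 := ((hs.pow 2).const_mul E)
  have h6 := (((hasDerivAt_id t).mul hs).const_mul F)
  have := (((((h1.add h2).add h3).add h4).add h5).add h6).add_const G
  exact this.congr_deriv (by simp only [id_eq]; ring)

/-- The explicit closed form y(t) (formula (A2) of the paper) satisfies y(0) = 0 and
y' = A y + f. -/
theorem stmt_13 (ω vth m m1 m2 k1 k2 : ℝ) (hω : 0 < ω) (hvth : 0 < vth) (hk1 : 0 < k1)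
    (hk2 : k2 = -ω ^ 2 / k1)
    (y : ℝ → Fin 2 → ℝ)
    (hy : ∀ t, y t = ![Real.cos (ω * t) * (2 * m * vth ^ 2 * Real.sin (ω * t) / (3 * ω)
            + t * vth * (m1 + m2) / 2)
          + vth * Real.sin (ω * t) * (2 * m * vth + 3 * (m1 - m2)) / (6 * ω),
        m * vth ^ 2 * Real.cos (ω * t) / (3 * k1)
          - m * vth ^ 2 * (Real.sin (ω * t)) ^ 2 / (3 * k1)
          - t * vth * (m1 + m2) * ω * Real.sin (ω * t) / (2 * k1)
          - m * vth ^ 2 / (3 * k1)]) :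
    y 0 = 0 ∧
      ∀ t, HasDerivAt y
        ((!![(0:ℝ), k1; k2, 0]).mulVec (y t)
          + ![m * (vth * Real.cos (ω * t)) ^ 2 + m1 * (vth * Real.cos (ω * t)),
              m2 * ((k2 / ω) * vth * Real.sin (ω * t))]) t := by
  have hω' : ω ≠ 0 := hω.ne'
  have hk1' : k1 ≠ 0 := hk1.ne'
  constructor
  · rw [hy 0]
    funext i
    fin_cases i <;> simp
  · intro t
    rw [hasDerivAt_pi]
    intro i
    have h0 : (fun t => y t 0) = fun t : ℝ =>
        (2 * m * vth ^ 2 / (3 * ω)) * (Real.cos (ω * t) * Real.sin (ω * t))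
          + (vth * (m1 + m2) / 2) * (t * Real.cos (ω * t))
          + (vth * (2 * m * vth + 3 * (m1 - m2)) / (6 * ω)) * Real.sin (ω * t)
          + 0 * Real.cos (ω * t) + 0 * (Real.sin (ω * t)) ^ 2
          + 0 * (t * Real.sin (ω * t)) + 0 := by
      funext t; rw [hy t]; simp; ring
    have h1 : (fun t => y t 1) = fun t : ℝ =>
        0 * (Real.cos (ω * t) * Real.sin (ω * t)) + 0 * (t * Real.cos (ω * t))
          + 0 * Real.sin (ω * t)
          + (m * vth ^ 2 / (3 * k1)) * Real.cos (ω * t)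
          + (-(m * vth ^ 2 / (3 * k1))) * (Real.sin (ω * t)) ^ 2
          + (-(vth * (m1 + m2) * ω / (2 * k1))) * (t * Real.sin (ω * t))
          + (-(m * vth ^ 2 / (3 * k1))) := by
      funext t; rw [hy t]; simp; ring
    fin_cases i
    · rw [show (fun t => y t (⟨0, by norm_num⟩ : Fin 2)) = (fun t => y t 0) from rfl, h0]
      convert aux13 ω (2 * m * vth ^ 2 / (3 * ω)) (vth * (m1 + m2) / 2)
        (vth * (2 * m * vth + 3 * (m1 - m2)) / (6 * ω)) 0 0 0 0 t using 1
      · rfl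
      · rfl
      rw [hy t]
      simp [Matrix.mulVec, dotProduct]
      field_simp
      linear_combination (12 * m * vth) * Real.sin_sq_add_cos_sq (ω * t)
    · rw [show (fun t => y t (⟨1, by norm_num⟩ : Fin 2)) = (fun t => y t 1) from rfl, h1]
      convert aux13 ω 0 0 0 (m * vth ^ 2 / (3 * k1)) (-(m * vth ^ 2 / (3 * k1)))
        (-(vth * (m1 + m2) * ω / (2 * k1))) (-(m * vth ^ 2 / (3 * k1))) t using 1
      · rfl
      · rfl
      rw [hy t, hk2]
      simp [Matrix.mulVec, dotProduct]
      field_simp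
      ring
end
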